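/- Let a, b, 𝒮, Y > 0 and define f : (0,∞) → ℝ by f(t) = 𝒮^{3/2}·[ ((a+bY)/2)·t² + (b·𝒮^{3/2}/4)·t⁴ − (1/6)·t⁶ ]. Then f attains its maximum on (0,∞) at the unique point t₀ determined by t₀² = (1/2)·[ b·𝒮^{3/2} + √(b²𝒮³ + 4(a+bY)) ], and for every t > 0 one has f(t) ≤ C(a,b,𝒮) + ((b²𝒮⁴ + 4a𝒮)^{3/2}/24)·[ (1 + (4b/(b²𝒮³+4a))·Y)^{3/2} − 1 ] + (b²𝒮³/4)·Y, where C(a,b,𝒮) := (a b 𝒮³)/4 + (b³𝒮⁶)/24 + ((b²𝒮⁴+4a𝒮)^{3/2})/24; moreover equality holds at t = t₀. -/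
import Mathlib

private lemma rpow32 (x : ℝ) (hx : 0 ≤ x) :
    x ^ ((3 : ℝ) / 2) = Real.sqrt x ^ 3 := by
  rw [Real.sqrt_eq_rpow, ← Real.rpow_natCast (x ^ ((1:ℝ)/2)) 3, ← Real.rpow_mul hx]
  norm_num

theorem stmt3 (a b S Y : ℝ) (ha : 0 < a) (hb : 0 < b) (hS : 0 < S) (hY : 0 < Y) :
    let f : ℝ → ℝ := fun t =>
      S ^ ((3 : ℝ) / 2) *
        ((a + b * Y) / 2 * t ^ 2 + b * S ^ ((3 : ℝ) / 2) / 4 * t ^ 4 - 1 / 6 * t ^ 6)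
    let t₀ : ℝ :=
      Real.sqrt ((b * S ^ ((3 : ℝ) / 2) + Real.sqrt (b ^ 2 * S ^ 3 + 4 * (a + b * Y))) / 2)
    let C : ℝ := a * b * S ^ 3 / 4 + b ^ 3 * S ^ 6 / 24 +
      (b ^ 2 * S ^ 4 + 4 * a * S) ^ ((3 : ℝ) / 2) / 24
    let RHS : ℝ := C +
      (b ^ 2 * S ^ 4 + 4 * a * S) ^ ((3 : ℝ) / 2) / 24 *
        ((1 + 4 * b / (b ^ 2 * S ^ 3 + 4 * a) * Y) ^ ((3 : ℝ) / 2) - 1) +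
      b ^ 2 * S ^ 3 / 4 * Y
    0 < t₀ ∧
    t₀ ^ 2 = (b * S ^ ((3 : ℝ) / 2) + Real.sqrt (b ^ 2 * S ^ 3 + 4 * (a + b * Y))) / 2 ∧
    (∀ t : ℝ, 0 < t → f t ≤ f t₀) ∧
    (∀ t : ℝ, 0 < t → (∀ s : ℝ, 0 < s → f s ≤ f t) → t = t₀) ∧
    (∀ t : ℝ, 0 < t → f t ≤ RHS) ∧
    f t₀ = RHS := by
  intro f t₀ C RHS
  have hf : ∀ t : ℝ, f t = S ^ ((3 : ℝ) / 2) *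
      ((a + b * Y) / 2 * t ^ 2 + b * S ^ ((3 : ℝ) / 2) / 4 * t ^ 4 - 1 / 6 * t ^ 6) :=
    fun _ => rfl
  set E : ℝ := S ^ ((3 : ℝ) / 2) with hEdef
  have hEpos : 0 < E := Real.rpow_pos_of_pos hS _
  have hE : E ^ 2 = S ^ 3 := by
    rw [hEdef, ← Real.rpow_natCast (S ^ ((3:ℝ)/2)) 2, ← Real.rpow_mul hS.le,
      ← Real.rpow_natCast S 3]
    norm_num
  have hΔpos : 0 < b ^ 2 * S ^ 3 + 4 * (a + b * Y) := by positivity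
  set r : ℝ := Real.sqrt (b ^ 2 * S ^ 3 + 4 * (a + b * Y)) with hrdef
  have hr2 : r ^ 2 = b ^ 2 * S ^ 3 + 4 * (a + b * Y) := Real.sq_sqrt hΔpos.le
  have hrpos : 0 < r := Real.sqrt_pos.mpr hΔpos
  have hrB : b * E < r := by nlinarith [hr2, hE, mul_pos hb hEpos, hrpos]
  have hu₀pos : 0 < (b * E + r) / 2 := by positivity
  have ht₀ : t₀ = Real.sqrt ((b * E + r) / 2) := rfl
  have ht₀pos : 0 < t₀ := by rw [ht₀]; exact Real.sqrt_pos.mpr hu₀pos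
  have ht₀sq : t₀ ^ 2 = (b * E + r) / 2 := by rw [ht₀]; exact Real.sq_sqrt hu₀pos.le
  -- key second-order fact at t₀
  have hu₀sq : (t₀ ^ 2) ^ 2 = (a + b * Y) + b * E * t₀ ^ 2 := by
    rw [ht₀sq]
    linear_combination (1/4) * hr2 - (b^2/4) * hE
  -- key identity
  have key : ∀ t : ℝ, f t₀ - f t =
      E * ((t ^ 2 - t₀ ^ 2) ^ 2 * (t ^ 2 + 2 * t₀ ^ 2 - 3 * (b * E) / 2) / 6) := by
    intro t
    rw [hf, hf]
    linear_combination (E * (t ^ 2 - t₀ ^ 2) / 2) * hu₀sq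
  have hfac : ∀ t : ℝ, 0 < t → 0 < t ^ 2 + 2 * t₀ ^ 2 - 3 * (b * E) / 2 := by
    intro t ht
    have h2 : 2 * t₀ ^ 2 = b * E + r := by rw [ht₀sq]; ring
    nlinarith [sq_nonneg t, mul_pos hb hEpos]
  have hmax : ∀ t : ℝ, 0 < t → f t ≤ f t₀ := by
    intro t ht
    have h1 : 0 ≤ (t ^ 2 - t₀ ^ 2) ^ 2 * (t ^ 2 + 2 * t₀ ^ 2 - 3 * (b * E) / 2) / 6 :=
      div_nonneg (mul_nonneg (sq_nonneg _) (hfac t ht).le) (by norm_num)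
    nlinarith [key t, mul_nonneg hEpos.le h1]
  -- equality
  have hD : 0 < b ^ 2 * S ^ 3 + 4 * a := by positivity
  have hDY : 0 < b ^ 2 * S ^ 3 + 4 * a + 4 * b * Y := by positivity
  have hT : (b ^ 2 * S ^ 4 + 4 * a * S) ^ ((3 : ℝ) / 2) =
      E * (b ^ 2 * S ^ 3 + 4 * a) ^ ((3 : ℝ) / 2) := by
    rw [show b ^ 2 * S ^ 4 + 4 * a * S = S * (b ^ 2 * S ^ 3 + 4 * a) from by ring,
      Real.mul_rpow hS.le hD.le]
  have hW : (1 + 4 * b / (b ^ 2 * S ^ 3 + 4 * a) * Y) =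
      (b ^ 2 * S ^ 3 + 4 * a + 4 * b * Y) / (b ^ 2 * S ^ 3 + 4 * a) := by
    field_simp
  have hprod : (b ^ 2 * S ^ 3 + 4 * a) ^ ((3 : ℝ) / 2) *
      ((b ^ 2 * S ^ 3 + 4 * a + 4 * b * Y) / (b ^ 2 * S ^ 3 + 4 * a)) ^ ((3 : ℝ) / 2)
      = r ^ 3 := by
    rw [← Real.mul_rpow hD.le (by positivity), mul_div_cancel₀ _ hD.ne',
      show b ^ 2 * S ^ 3 + 4 * a + 4 * b * Y = b ^ 2 * S ^ 3 + 4 * (a + b * Y) from by ring,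
      rpow32 _ hΔpos.le, hrdef]
  have hRHS : RHS = a * b * S ^ 3 / 4 + b ^ 3 * S ^ 6 / 24 + b ^ 2 * S ^ 3 / 4 * Y
      + E * r ^ 3 / 24 := by
    show C + _ + _ = _
    rw [show C = a * b * S ^ 3 / 4 + b ^ 3 * S ^ 6 / 24 +
      (b ^ 2 * S ^ 4 + 4 * a * S) ^ ((3 : ℝ) / 2) / 24 from rfl, hT, hW]
    linear_combination (E / 24) * hprod
  have heq : f t₀ = RHS := by
    rw [hf, hRHS,
      show t₀ ^ 6 = (t₀ ^ 2) ^ 3 from by ring,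
      show t₀ ^ 4 = (t₀ ^ 2) ^ 2 from by ring, ht₀sq]
    linear_combination (-(E * r) / 16) * hr2 +
      (E * r * b ^ 2 / 16 + (a + b * Y) * b / 4 + b ^ 3 * (E ^ 2 + S ^ 3) / 24) * hE
  have huniq : ∀ t : ℝ, 0 < t → (∀ s : ℝ, 0 < s → f s ≤ f t) → t = t₀ := by
    intro t ht htmax
    have h1 : f t₀ ≤ f t := htmax t₀ ht₀pos
    have h2 : f t ≤ f t₀ := hmax t ht
    have h3 : f t₀ - f t = 0 := by linarith
    have h4 := key t
    rw [h3] at h4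
    have h5 : (t ^ 2 - t₀ ^ 2) ^ 2 = 0 := by
      by_contra hne
      have hpos : 0 < (t ^ 2 - t₀ ^ 2) ^ 2 :=
        lt_of_le_of_ne (sq_nonneg _) (Ne.symm hne)
      have hp2 : 0 < (t ^ 2 - t₀ ^ 2) ^ 2 * (t ^ 2 + 2 * t₀ ^ 2 - 3 * (b * E) / 2) / 6 :=
        div_pos (mul_pos hpos (hfac t ht)) (by norm_num)
      have := mul_pos hEpos hp2
      linarith
    have h6 : t ^ 2 = t₀ ^ 2 := by
      have := pow_eq_zero_iff (n := 2) (by norm_num) |>.mp h5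
      linarith
    calc t = Real.sqrt (t ^ 2) := (Real.sqrt_sq ht.le).symm
      _ = Real.sqrt (t₀ ^ 2) := by rw [h6]
      _ = t₀ := Real.sqrt_sq ht₀pos.le
  refine ⟨ht₀pos, ht₀sq, hmax, huniq, fun t ht => heq ▸ hmax t ht, heq⟩
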